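/- Let m ≥ 1 be an integer, q₀ = 2^m, q = 2q₀², and let 𝒫 ⊆ ℕ be the additive submonoid generated by q, q+q₀, q+2q₀, and q+2q₀+1. Then 2q₀(q−1) − 1 ∉ 𝒫, and every natural number n with n ≥ 2q₀(q−1) belongs to 𝒫. -/

import Mathlib

private lemma mem_closure4 {w x y z n : ℕ} :
    n ∈ AddSubmonoid.closure ({w, x, y, z} : Set ℕ) ↔
    ∃ a b c d : ℕ, n = a * w + b * x + c * y + d * z := by
  constructor
  · intro h
    induction h using AddSubmonoid.closure_induction with
    | mem g hg =>
        rcases hg with h | h | h | h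
        · exact ⟨1, 0, 0, 0, by simp [h]⟩
        · exact ⟨0, 1, 0, 0, by simp [h]⟩
        · exact ⟨0, 0, 1, 0, by simp [h]⟩
        · exact ⟨0, 0, 0, 1, by simp at h; simp [h]⟩
    | zero => exact ⟨0, 0, 0, 0, by simp⟩
    | add p q' hp hq' ihp ihq =>
        obtain ⟨a, b, c, d, rfl⟩ := ihp
        obtain ⟨a', b', c', d', rfl⟩ := ihq
        exact ⟨a + a', b + b', c + c', d + d', by ring⟩
  · rintro ⟨a, b, c, d, rfl⟩
    have hw : w ∈ AddSubmonoid.closure ({w, x, y, z} : Set ℕ) :=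
      AddSubmonoid.subset_closure (by simp)
    have hx : x ∈ AddSubmonoid.closure ({w, x, y, z} : Set ℕ) :=
      AddSubmonoid.subset_closure (by simp)
    have hy : y ∈ AddSubmonoid.closure ({w, x, y, z} : Set ℕ) :=
      AddSubmonoid.subset_closure (by simp)
    have hz : z ∈ AddSubmonoid.closure ({w, x, y, z} : Set ℕ) :=
      AddSubmonoid.subset_closure (by simp)
    have : ∀ (k g : ℕ), g ∈ AddSubmonoid.closure ({w, x, y, z} : Set ℕ) →
        k * g ∈ AddSubmonoid.closure ({w, x, y, z} : Set ℕ) := by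
      intro k g hg
      simpa [smul_eq_mul] using AddSubmonoid.nsmul_mem (AddSubmonoid.closure _) hg k
    exact add_mem (add_mem (add_mem (this a w hw) (this b x hx)) (this c y hy)) (this d z hz)

private lemma suzuki_not_mem (q₀ : ℕ) (hQ : 2 ≤ q₀) :
    ¬ ∃ a b c d : ℕ, 2 * q₀ * (2 * q₀ ^ 2 - 1) - 1 =
      a * (2 * q₀ ^ 2) + b * (2 * q₀ ^ 2 + q₀) + c * (2 * q₀ ^ 2 + 2 * q₀)
      + d * (2 * q₀ ^ 2 + 2 * q₀ + 1) := by
  rintro ⟨a, b, c, d, hn⟩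
  have h1 : 1 ≤ 2 * q₀ ^ 2 := by nlinarith
  have h2 : 2 * q₀ + 1 ≤ 2 * q₀ * (2 * q₀ ^ 2 - 1) := by
    have h3 : q₀ ^ 2 ≥ 4 := by nlinarith
    calc 2 * q₀ + 1 ≤ 2 * q₀ * 7 := by omega
      _ ≤ 2 * q₀ * (2 * q₀ ^ 2 - 1) := by
          apply Nat.mul_le_mul_left; omega
  have key : 4 * q₀ ^ 3 =
      a * (2 * q₀ ^ 2) + b * (2 * q₀ ^ 2 + q₀) + c * (2 * q₀ ^ 2 + 2 * q₀)
      + d * (2 * q₀ ^ 2 + 2 * q₀ + 1) + 2 * q₀ + 1 := by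
    have h2' : 1 ≤ 2 * q₀ * (2 * q₀ ^ 2 - 1) := by omega
    zify [h1, h2'] at hn ⊢
    linarith [hn]
  clear hn h2
  obtain ⟨k, r, hd, hr⟩ : ∃ k r, d = q₀ * k + r ∧ r < q₀ :=
    ⟨d / q₀, d % q₀, (Nat.div_add_mod d q₀).symm, Nat.mod_lt _ (by omega)⟩
  subst hd
  -- q₀ ∣ r + 1
  have heq : q₀ * (2 * q₀ * (a + b + c) + (b + 2 * c) + k * (2 * q₀ ^ 2 + 2 * q₀ + 1)
      + r * (2 * q₀ + 2) + 2) + (r + 1) = q₀ * (4 * q₀ ^ 2) := by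
    rw [show q₀ * (4 * q₀ ^ 2) = 4 * q₀ ^ 3 by ring, key]; ring
  have hdvd : q₀ ∣ r + 1 := by
    have : q₀ ∣ q₀ * (2 * q₀ * (a + b + c) + (b + 2 * c) + k * (2 * q₀ ^ 2 + 2 * q₀ + 1)
      + r * (2 * q₀ + 2) + 2) + (r + 1) := heq ▸ Dvd.intro _ rfl
    exact (Nat.dvd_add_right (Dvd.intro _ rfl)).mp this
  have hr1 : r + 1 = q₀ := Nat.le_antisymm (by omega) (Nat.le_of_dvd (by omega) hdvd)
  subst hr1
  rcases Nat.eq_zero_or_pos k with hk | hk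
  · subst hk
    -- key : 4*(r+1)^3 = ... with d = r, q₀ = r+1
    have hs : a + b + c ≤ r := by
      by_contra h
      push_neg at h
      nlinarith [key]
    nlinarith [key, hs]
  · have hk' : 2 * r + 1 ≤ (r + 1) * k + r := by nlinarith
    have hbig : (2 * r + 1) * (2 * (r + 1) ^ 2 + 2 * (r + 1) + 1)
        ≤ ((r + 1) * k + r) * (2 * (r + 1) ^ 2 + 2 * (r + 1) + 1) :=
      Nat.mul_le_mul_right _ hk'
    nlinarith [key, hbig]

private lemma suzuki_mem (q₀ n : ℕ) (hQ : 2 ≤ q₀) (hn : 2 * q₀ * (2 * q₀ ^ 2 - 1) ≤ n) :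
    ∃ a b c d : ℕ, n = a * (2 * q₀ ^ 2) + b * (2 * q₀ ^ 2 + q₀) + c * (2 * q₀ ^ 2 + 2 * q₀)
      + d * (2 * q₀ ^ 2 + 2 * q₀ + 1) := by
  have h1 : 1 ≤ 2 * q₀ ^ 2 := by nlinarith
  have hn' : 4 * q₀ ^ 3 ≤ n + 2 * q₀ := by
    zify [h1] at hn ⊢
    nlinarith [hn]
  clear hn
  set r := n % q₀ with hrdef
  have hr : r < q₀ := Nat.mod_lt _ (by omega)
  have hnm : n = q₀ * (n / q₀) + r := (Nat.div_add_mod n q₀).symm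
  have hle : r * (2 * q₀ + 2) ≤ n / q₀ := by
    rw [Nat.le_div_iff_mul_le (by omega : 0 < q₀)]
    nlinarith [hr, hn']
  obtain ⟨m', hm'⟩ := Nat.le.dest hle
  -- n = q₀ * m' + r * (2q₀² + 2q₀ + 1)
  have heqn : n = q₀ * m' + r * (2 * q₀ ^ 2 + 2 * q₀ + 1) := by
    rw [hnm, ← hm']; ring
  have hm2 : 2 * q₀ ^ 2 ≤ m' := by
    by_contra h
    push_neg at h
    nlinarith [heqn, hn', hr, h]
  obtain ⟨s, t, hst, ht⟩ : ∃ s t, m' = 2 * q₀ * s + t ∧ t < 2 * q₀ :=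
    ⟨m' / (2 * q₀), m' % (2 * q₀), (Nat.div_add_mod m' (2 * q₀)).symm,
      Nat.mod_lt _ (by omega)⟩
  have hs : q₀ ≤ s := by
    by_contra h
    push_neg at h
    nlinarith [hm2, hst, ht, h]
  rcases le_or_gt t s with hts | hts
  · obtain ⟨u, hu⟩ := Nat.le.dest hts
    exact ⟨u, t, 0, r, by rw [heqn, hst, ← hu]; ring⟩
  · obtain ⟨v, hv⟩ := Nat.le.dest hts.le
    have hvs : v ≤ s := by omega
    obtain ⟨w, hw⟩ := Nat.le.dest hvs
    exact ⟨0, w, v, r, by rw [heqn, hst, ← hv, ← hw]; ring⟩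

theorem suzuki_semigroup_frobenius_number
    (m q₀ q : ℕ) (hm : 1 ≤ m) (hq₀ : q₀ = 2 ^ m) (hq : q = 2 * q₀ ^ 2)
    (P : AddSubmonoid ℕ)
    (hP : P = AddSubmonoid.closure ({q, q + q₀, q + 2 * q₀, q + 2 * q₀ + 1} : Set ℕ)) :
    2 * q₀ * (q - 1) - 1 ∉ P ∧ ∀ n : ℕ, 2 * q₀ * (q - 1) ≤ n → n ∈ P := by
  have hQ : 2 ≤ q₀ := by
    subst hq₀
    calc 2 = 2 ^ 1 := rfl
      _ ≤ 2 ^ m := Nat.pow_le_pow_right (by norm_num) hm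
  subst hq hP
  constructor
  · rw [mem_closure4]
    exact suzuki_not_mem q₀ hQ
  · intro n hn
    rw [mem_closure4]
    exact suzuki_mem q₀ n hQ hn
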